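/- Let C₈ ⊆ F_2^8 be an (8,16,4)-code and let B ⊆ F_2^8 be an (8,2^7,2)-code. Then the set D = {(x+y, x+z, x+y+z) : x ∈ C₈, y, z ∈ B} ⊆ F_2^24 (concatenation of three length-8 blocks, addition in F_2^8) is a (24, 2^18, 4)-code: it has exactly 2^18 elements and any two distinct elements are at Hamming distance at least 4. -/

import Mathlib

abbrev Word (n : ℕ) := Fin n → ZMod 2

def cat3 (u v w : Word 8) : Word 24 := Fin.append (Fin.append u v) w

def IsCode (n M d : ℕ) (C : Set (Word n)) : Prop :=
  C.ncard = M ∧ ∀ u ∈ C, ∀ v ∈ C, u ≠ v → d ≤ hammingDist u v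

-- helpers
lemma ncard_prod {α β : Type*} (s : Set α) (t : Set β) :
    (s ×ˢ t).ncard = s.ncard * t.ncard := by
  rw [← Nat.card_coe_set_eq, ← Nat.card_coe_set_eq, ← Nat.card_coe_set_eq,
    Nat.card_congr (Equiv.Set.prod s t), Nat.card_prod]

lemma hammingDist_append {m n : ℕ} (a c : Word m) (b d : Word n) :
    hammingDist (Fin.append a b) (Fin.append c d) = hammingDist a c + hammingDist b d := by
  classical
  classical
  simp only [hammingDist, Finset.card_filter]
  rw [Fin.sum_univ_add]
  simp [Fin.append_left, Fin.append_right]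

lemma hammingDist_add_right {n : ℕ} (a b c : Word n) :
    hammingDist (a + c) (b + c) = hammingDist a b :=
  hammingDist_comp (fun _ x => x + c _) (fun i => add_left_injective (c i))

lemma hammingNorm_add_le {n : ℕ} (a b : Word n) :
    hammingNorm (a + b) ≤ hammingNorm a + hammingNorm b := by
  rw [← hammingDist_zero_right, ← hammingDist_zero_right, ← hammingDist_zero_right]
  calc hammingDist (a + b) 0 ≤ hammingDist (a + b) b + hammingDist b 0 :=
        hammingDist_triangle _ _ _
    _ = hammingDist a 0 + hammingDist b 0 := by
        rw [show (a + b : Word n) = a + b from rfl, ← zero_add b, ← add_assoc, add_zero,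
          hammingDist_add_right]

lemma hammingDist_add_left {n : ℕ} (c a b : Word n) :
    hammingDist (c + a) (c + b) = hammingDist a b :=
  hammingDist_comp (fun i x => c i + x) (fun i => add_right_injective (c i))

lemma hammingDist_cat3 (u v w u' v' w' : Word 8) :
    hammingDist (cat3 u v w) (cat3 u' v' w') =
      hammingDist u u' + hammingDist v v' + hammingDist w w' := by
  exact (hammingDist_append (Fin.append u v) (Fin.append u' v') w w').trans
    (by rw [hammingDist_append])

lemma cat3_inj {u v w u' v' w' : Word 8} (h : cat3 u v w = cat3 u' v' w') :
    u = u' ∧ v = v' ∧ w = w' := by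
  have h0 : hammingDist (cat3 u v w) (cat3 u' v' w') = 0 := by rw [h, hammingDist_self]
  rw [hammingDist_cat3] at h0
  refine ⟨eq_of_hammingDist_eq_zero ?_, eq_of_hammingDist_eq_zero ?_,
    eq_of_hammingDist_eq_zero ?_⟩ <;> omega

theorem D_is_code (C₈ B : Set (Word 8))
    (hC : IsCode 8 16 4 C₈) (hB : IsCode 8 (2 ^ 7) 2 B) :
    IsCode 24 (2 ^ 18) 4
      {w | ∃ x ∈ C₈, ∃ y ∈ B, ∃ z ∈ B, w = cat3 (x + y) (x + z) (x + y + z)} := by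
  set f : Word 8 × Word 8 × Word 8 → Word 24 :=
    fun p => cat3 (p.1 + p.2.1) (p.1 + p.2.2) (p.1 + p.2.1 + p.2.2) with hf
  have key : ∀ a b c a' b' c' : ZMod 2,
      a + b = a' + b' → a + c = a' + c' → a + b + c = a' + b' + c' →
        a = a' ∧ b = b' ∧ c = c' := by decide
  have hinj : Function.Injective f := by
    intro ⟨x, y, z⟩ ⟨x', y', z'⟩ h
    obtain ⟨e1, e2, e3⟩ := cat3_inj h
    have hx : x = x' ∧ y = y' ∧ z = z' := by
      refine ⟨funext fun i => ?_, funext fun i => ?_, funext fun i => ?_⟩ <;>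
        [exact (key _ _ _ _ _ _ (congrFun e1 i) (congrFun e2 i) (congrFun e3 i)).1;
         exact (key _ _ _ _ _ _ (congrFun e1 i) (congrFun e2 i) (congrFun e3 i)).2.1;
         exact (key _ _ _ _ _ _ (congrFun e1 i) (congrFun e2 i) (congrFun e3 i)).2.2]
    simp only [Prod.mk.injEq]
    exact ⟨hx.1, hx.2.1, hx.2.2⟩
  have himg : {w | ∃ x ∈ C₈, ∃ y ∈ B, ∃ z ∈ B, w = cat3 (x + y) (x + z) (x + y + z)} =
      f '' (C₈ ×ˢ B ×ˢ B) := by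
    ext w
    constructor
    · rintro ⟨x, hx, y, hy, z, hz, rfl⟩
      exact ⟨(x, y, z), ⟨hx, hy, hz⟩, rfl⟩
    · rintro ⟨⟨x, y, z⟩, ⟨hx, hy, hz⟩, rfl⟩
      exact ⟨x, hx, y, hy, z, hz, rfl⟩
  constructor
  · rw [himg, Set.ncard_image_of_injective _ hinj, ncard_prod, ncard_prod, hC.1, hB.1]
    norm_num
  · rintro w1 ⟨x, hx, y, hy, z, hz, rfl⟩ w2 ⟨x', hx', y', hy', z', hz', rfl⟩ hne
    rw [hammingDist_cat3]
    by_cases hxx : x = x'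
    · subst hxx
      have hyz : y ≠ y' ∨ z ≠ z' := by
        by_contra hcon
        push_neg at hcon
        exact hne (by rw [hcon.1, hcon.2])
      have d1 : hammingDist (x + y) (x + y') = hammingDist y y' := hammingDist_add_left _ _ _
      have d2 : hammingDist (x + z) (x + z') = hammingDist z z' := hammingDist_add_left _ _ _
      have d3 : hammingDist (x + y + z) (x + y' + z') = hammingDist (y + z) (y' + z') := by
        rw [add_assoc, add_assoc]; exact hammingDist_add_left _ _ _
      rw [d1, d2, d3]
      by_cases hyy : y = y'
      · subst hyy
        have hzz : z ≠ z' := by tauto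
        have : hammingDist (y + z) (y + z') = hammingDist z z' := hammingDist_add_left _ _ _
        rw [this]
        have := hB.2 z hz z' hz' hzz
        omega
      · by_cases hzz : z = z'
        · subst hzz
          have : hammingDist (y + z) (y' + z) = hammingDist y y' := hammingDist_add_right _ _ _
          rw [this]
          have := hB.2 y hy y' hy' hyy
          omega
        · have h1 := hB.2 y hy y' hy' hyy
          have h2 := hB.2 z hz z' hz' hzz
          omega
    · -- x ≠ x'
      have key2 : ∀ a b c a' b' c' : ZMod 2,
          ((a + b) - (a' + b')) + ((a + c) - (a' + c')) + ((a + b + c) - (a' + b' + c'))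
            = a - a' := by decide
      set s1 : Word 8 := (x + y) - (x' + y') with hs1
      set s2 : Word 8 := (x + z) - (x' + z') with hs2
      set s3 : Word 8 := (x + y + z) - (x' + y' + z') with hs3
      have hsum : s1 + s2 + s3 = x - x' :=
        funext fun i => key2 (x i) (y i) (z i) (x' i) (y' i) (z' i)
      have e1 : hammingDist (x + y) (x' + y') = hammingNorm s1 := by
        rw [hammingDist_comm, hammingDist_eq_hammingNorm, neg_add_eq_sub]
      have e2 : hammingDist (x + z) (x' + z') = hammingNorm s2 := by
        rw [hammingDist_comm, hammingDist_eq_hammingNorm, neg_add_eq_sub]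
      have e3 : hammingDist (x + y + z) (x' + y' + z') = hammingNorm s3 := by
        rw [hammingDist_comm, hammingDist_eq_hammingNorm, neg_add_eq_sub]
      have hxd : 4 ≤ hammingNorm (x - x') := by
        rw [← neg_add_eq_sub, ← hammingDist_eq_hammingNorm, hammingDist_comm]
        exact hC.2 x hx x' hx' hxx
      have t1 : hammingNorm (x - x') ≤ hammingNorm (s1 + s2) + hammingNorm s3 := by
        rw [← hsum]; exact hammingNorm_add_le _ _
      have t2 : hammingNorm (s1 + s2) ≤ hammingNorm s1 + hammingNorm s2 :=
        hammingNorm_add_le _ _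
      omega
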